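/- Let c* be a conjunction on {0,1}^n, let μ be a distribution on {0,1}^n supported on points satisfying c*, and let h be the largest consistent conjunction of m i.i.d. samples x_1,...,x_m from μ. Then the expected μ-probability that a fresh sample x satisfies h(x)=0 is at most 2n/(m+1). -/

import Mathlib

open MeasureTheory
open scoped ENNReal

/-- A point `x : Fin n → Bool` satisfies a conjunction given by a set of
literals `L ⊆ Fin n × Bool` iff every literal `(j, b) ∈ L` holds: `x j = b`. -/
def SatisfiesConj {n : ℕ} (L : Set (Fin n × Bool)) (x : Fin n → Bool) : Prop :=
  ∀ p ∈ L, x p.1 = p.2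

/-- The largest conjunction consistent with the samples `x 0, ..., x (m-1)`:
all literals satisfied by every sample. -/
def LargestConsistent {n m : ℕ} (x : Fin m → Fin n → Bool) : Set (Fin n × Bool) :=
  {p : Fin n × Bool | ∀ i, x i p.1 = p.2}

lemma real_key (m : ℕ) (a b : ℝ) (ha : 0 ≤ a) (hb : 0 ≤ b) (hab : a + b = 1) :
    a ^ m * b ≤ 1 / (m + 1) := by
  have ha1 : a ≤ 1 := by linarith
  have h1 : (m + 1 : ℝ) * a ^ m ≤ ∑ k ∈ Finset.range (m + 1), a ^ k := by
    calc (m + 1 : ℝ) * a ^ m = ∑ _k ∈ Finset.range (m + 1), a ^ m := by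
          simp [Finset.sum_const]
      _ ≤ ∑ k ∈ Finset.range (m + 1), a ^ k :=
          Finset.sum_le_sum fun k hk =>
            pow_le_pow_of_le_one ha ha1 (Nat.lt_succ_iff.mp (Finset.mem_range.mp hk))
  have hg := geom_sum_mul a (m + 1)
  have h2 : (∑ k ∈ Finset.range (m + 1), a ^ k) * b = 1 - a ^ (m + 1) := by
    have hb' : b = -(a - 1) := by linarith
    rw [hb', mul_neg, hg]; ring
  have h3 : (m + 1 : ℝ) * a ^ m * b ≤ (∑ k ∈ Finset.range (m + 1), a ^ k) * b :=
    mul_le_mul_of_nonneg_right h1 hb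
  have h4 : (0:ℝ) ≤ a ^ (m + 1) := pow_nonneg ha _
  have hm : (0:ℝ) < m + 1 := by positivity
  rw [le_div_iff₀ hm]
  nlinarith

lemma ennreal_key (m : ℕ) (q r : ℝ≥0∞) (hq : q ≠ ⊤) (hr : r ≠ ⊤) (hqr : q + r = 1) :
    q ^ m * r ≤ ENNReal.ofReal (1 / (m + 1)) := by
  have hq' := ENNReal.toReal_nonneg (a := q)
  have hr' := ENNReal.toReal_nonneg (a := r)
  have hsum : q.toReal + r.toReal = 1 := by
    rw [← ENNReal.toReal_add hq hr, hqr]; simp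
  have hreal := real_key m q.toReal r.toReal hq' hr' hsum
  calc q ^ m * r = ENNReal.ofReal (q.toReal ^ m * r.toReal) := by
        rw [ENNReal.ofReal_mul (by positivity), ENNReal.ofReal_pow hq',
          ENNReal.ofReal_toReal hq, ENNReal.ofReal_toReal hr]
    _ ≤ ENNReal.ofReal (1 / (m + 1)) := ENNReal.ofReal_le_ofReal hreal

theorem stmt_13 (n m : ℕ) (μ : Measure (Fin n → Bool)) [IsProbabilityMeasure μ]
    (cstar : Set (Fin n × Bool)) (hsupp : ∀ᵐ x ∂μ, SatisfiesConj cstar x) :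
    (∫⁻ X : Fin m → (Fin n → Bool),
        μ {y | ¬ SatisfiesConj (LargestConsistent X) y}
        ∂(Measure.pi fun _ : Fin m => μ)) ≤
      ENNReal.ofReal (2 * n / (m + 1)) := by
  classical
  set π := Measure.pi fun _ : Fin m => μ with hπ
  have hAll : ∀ s : Set (Fin n → Bool), MeasurableSet s :=
    fun s => (Set.to_countable s).measurableSet
  have hAll' : ∀ s : Set (Fin m → Fin n → Bool), MeasurableSet s :=
    fun s => (Set.to_countable s).measurableSet
  set S : (Fin n × Bool) → (Fin m → Fin n → Bool) → Set (Fin n → Bool) :=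
    fun p X => {y | (∀ i, X i p.1 = p.2) ∧ y p.1 ≠ p.2} with hS
  have step1 : ∀ X : Fin m → Fin n → Bool,
      μ {y | ¬ SatisfiesConj (LargestConsistent X) y} ≤ ∑ p : Fin n × Bool, μ (S p X) := by
    intro X
    have hsub : {y | ¬ SatisfiesConj (LargestConsistent X) y} ⊆ ⋃ p, S p X := by
      intro y hy
      simp only [Set.mem_setOf_eq, SatisfiesConj, not_forall] at hy
      obtain ⟨p, hp, hne⟩ := hy
      exact Set.mem_iUnion.mpr ⟨p, hp, hne⟩
    calc μ _ ≤ μ (⋃ p, S p X) := measure_mono hsub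
      _ ≤ ∑' p, μ (S p X) := measure_iUnion_le _
      _ = ∑ p, μ (S p X) := tsum_fintype _
  have step2 : (∫⁻ X, μ {y | ¬ SatisfiesConj (LargestConsistent X) y} ∂π)
      ≤ ∑ p : Fin n × Bool, ∫⁻ X, μ (S p X) ∂π := by
    calc _ ≤ ∫⁻ X, ∑ p : Fin n × Bool, μ (S p X) ∂π := lintegral_mono step1
      _ = ∑ p : Fin n × Bool, ∫⁻ X, μ (S p X) ∂π :=
        lintegral_finset_sum _ (fun p _ => measurable_of_countable _)
  have step3 : ∀ p : Fin n × Bool,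
      (∫⁻ X, μ (S p X) ∂π) ≤ ENNReal.ofReal (1 / (m + 1)) := by
    intro p
    set q := μ {x | x p.1 = p.2} with hq
    set r := μ {y : Fin n → Bool | y p.1 ≠ p.2} with hr
    have hqr : q + r = 1 := by
      have hrc : {y : Fin n → Bool | y p.1 ≠ p.2} = {x | x p.1 = p.2}ᶜ := by
        ext y; simp
      rw [hq, hr, hrc, measure_add_measure_compl (hAll _), measure_univ]
    have hind : ∀ X, μ (S p X) =
        Set.indicator {X : Fin m → Fin n → Bool | ∀ i, X i p.1 = p.2} (fun _ => r) X := by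
      intro X
      by_cases h : ∀ i, X i p.1 = p.2
      · have : S p X = {y : Fin n → Bool | y p.1 ≠ p.2} := by
          ext y; simp [hS, h]
        rw [this, Set.indicator_of_mem (show X ∈ {X : Fin m → Fin n → Bool | ∀ i, X i p.1 = p.2} from h)]
      · have : S p X = ∅ := by
          ext y; simp only [hS, Set.mem_setOf_eq, Set.mem_empty_iff_false, iff_false]
          exact fun hc => h hc.1
        rw [this, Set.indicator_of_notMem (show X ∉ {X : Fin m → Fin n → Bool | ∀ i, X i p.1 = p.2} from h), measure_empty]
    have hA : {X : Fin m → Fin n → Bool | ∀ i, X i p.1 = p.2}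
        = Set.pi Set.univ (fun _ : Fin m => {x : Fin n → Bool | x p.1 = p.2}) := by
      ext X; simp [Set.mem_pi]
    have hπA : π {X : Fin m → Fin n → Bool | ∀ i, X i p.1 = p.2} = q ^ m := by
      rw [hA, hπ, Measure.pi_pi]
      simp [hq]
    calc (∫⁻ X, μ (S p X) ∂π)
        = ∫⁻ X, Set.indicator {X : Fin m → Fin n → Bool | ∀ i, X i p.1 = p.2}
            (fun _ => r) X ∂π := by
          exact lintegral_congr hind
      _ = r * π {X : Fin m → Fin n → Bool | ∀ i, X i p.1 = p.2} := by
          rw [lintegral_indicator (hAll' _), setLIntegral_const]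
      _ = q ^ m * r := by rw [hπA, mul_comm]
      _ ≤ ENNReal.ofReal (1 / (m + 1)) :=
          ennreal_key m q r (measure_ne_top μ _) (measure_ne_top μ _) hqr
  calc (∫⁻ X, μ {y | ¬ SatisfiesConj (LargestConsistent X) y} ∂π)
      ≤ ∑ p : Fin n × Bool, ∫⁻ X, μ (S p X) ∂π := step2
    _ ≤ ∑ _p : Fin n × Bool, ENNReal.ofReal (1 / (m + 1)) :=
        Finset.sum_le_sum fun p _ => step3 p
    _ = (2 * n : ℕ) * ENNReal.ofReal (1 / (m + 1)) := by
        rw [Finset.sum_const, nsmul_eq_mul]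
        congr 1
        simp [Fintype.card_prod, mul_comm]
    _ ≤ ENNReal.ofReal (2 * n / (m + 1)) := by
        rw [← ENNReal.ofReal_natCast, ← ENNReal.ofReal_mul (by positivity)]
        apply ENNReal.ofReal_le_ofReal
        rw [Nat.cast_mul]
        push_cast
        rw [mul_one_div]
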